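/- Let $-\pi < \theta_m < \theta_M < \pi$, let $W$ be the open sector $\{\mathbf{x} : \theta_m < \arg(x_1+ix_2) < \theta_M\}$, and let $u_0(s\mathbf{x}) = \exp(\sqrt{sr}(\cos(\theta/2+\pi) + i\sin(\theta/2+\pi)))$. Then for every $s > 0$, $\int_W u_0(s\mathbf{x})\, d\mathbf{x} = 6i(e^{-2i\theta_M} - e^{-2i\theta_m})\, s^{-2}$. -/

import Mathlib

open Real Complex Set MeasureTheory
open Filter
open scoped Topology

/-- The CGO solution `u₀(x) = exp(√r (cos(θ/2+π) + i sin(θ/2+π)))` with the plane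
identified with `ℂ`, `r = |z|`, `θ = arg z`. -/
noncomputable def u0 (z : ℂ) : ℂ :=
  Complex.exp ((Real.sqrt ‖z‖ : ℂ) *
    ((Real.cos (z.arg / 2 + Real.pi) : ℂ) + Complex.I * (Real.sin (z.arg / 2 + Real.pi) : ℂ)))

/-- The open sector `W = {z ≠ 0 : θ_m < arg z < θ_M}`. -/
def sectorW (θm θM : ℝ) : Set ℂ := {z : ℂ | z ≠ 0 ∧ θm < z.arg ∧ z.arg < θM}

lemma aux_norm3 {b : ℂ} (t : ℝ) (ht : 0 < t) :
    ‖(t : ℂ) ^ 3 * Complex.exp (-(b * t))‖ = t ^ 3 * Real.exp (-(b.re * t)) := by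
  rw [norm_mul, norm_pow, Complex.norm_exp,
    Complex.norm_real, Real.norm_eq_abs, abs_of_pos ht]
  congr 1
  simp

-- integrability of t^3 exp(-bt)
lemma aux_int3 {b : ℂ} (hb : 0 < b.re) :
    IntegrableOn (fun t : ℝ => (t : ℂ) ^ 3 * Complex.exp (-(b * t))) (Ioi 0) := by
  have h4 : (0:ℝ) < 4 := by norm_num
  have H := Real.GammaIntegral_convergent h4
  rw [← mul_zero b.re, ← integrableOn_Ioi_comp_mul_left_iff _ _ hb] at H
  refine ((H.const_mul (b.re ^ 3)⁻¹).mono' ?_ ?_)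
  · exact (Continuous.mul (by continuity) (by continuity)).aestronglyMeasurable
  · filter_upwards [ae_restrict_mem measurableSet_Ioi] with t ht
    rw [mem_Ioi] at ht
    rw [aux_norm3 t ht]
    have : (b.re ^ 3)⁻¹ * (Real.exp (-(b.re * t)) * (b.re * t) ^ ((4:ℝ) - 1)) =
        t ^ 3 * Real.exp (-(b.re * t)) := by
      have : ((4:ℝ) - 1) = ((3:ℕ):ℝ) := by norm_num
      rw [this, Real.rpow_natCast, mul_pow]
      field_simp [hb.ne']
    rw [this]

lemma aux_tendsto_real {c : ℝ} (hc : 0 < c) (n : ℕ) :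
    Tendsto (fun t : ℝ => t ^ n * Real.exp (-(c * t))) atTop (𝓝 0) := by
  have h := (tendsto_pow_mul_exp_neg_atTop_nhds_zero n).comp
    (tendsto_id.const_mul_atTop hc)
  have h2 := h.const_mul (1 / c ^ n)
  rw [mul_zero] at h2
  convert h2 using 2 with t
  simp only [Function.comp]
  field_simp [mul_pow]
  simp only [id]; rw [mul_comm c t]; ring

lemma aux_term_tendsto {b : ℂ} (hb : 0 < b.re) (n : ℕ) (c : ℂ) :
    Tendsto (fun t : ℝ => (t : ℂ) ^ n * Complex.exp (-(b * t)) * c) atTop (𝓝 0) := by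
  rw [tendsto_zero_iff_norm_tendsto_zero]
  apply squeeze_zero' (Eventually.of_forall fun t => norm_nonneg _)
  · filter_upwards [eventually_ge_atTop (0:ℝ)] with t ht
    have : ‖(t : ℂ) ^ n * Complex.exp (-(b * t)) * c‖
        = t ^ n * Real.exp (-(b.re * t)) * ‖c‖ := by
      rw [norm_mul, norm_mul, norm_pow,
        Complex.norm_exp, Complex.norm_real, Real.norm_eq_abs, _root_.abs_of_nonneg ht]
      congr 2
      simp
    rw [this]
  · simpa using (aux_tendsto_real hb n).mul_const ‖c‖

lemma aux_val3 {b : ℂ} (hb : 0 < b.re) :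
    ∫ t in Ioi (0:ℝ), (t : ℂ) ^ 3 * Complex.exp (-(b * t)) = 6 / b ^ 4 := by
  have hb0 : b ≠ 0 := fun h => by simp [h] at hb
  set F : ℝ → ℂ := fun t =>
    -Complex.exp (-(b * t)) * (b^3*(t:ℂ)^3 + (3*b^2*(t:ℂ)^2 + (6*b*(t:ℂ) + 6))) with hF
  have hderiv : ∀ t : ℝ, t ∈ Ici (0:ℝ) →
      HasDerivAt F (b ^ 4 * ((t : ℂ) ^ 3 * Complex.exp (-(b * t)))) t := by
    intro t _
    have h1 : HasDerivAt (fun z : ℂ => -(b * z)) (-b) t := by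
      simpa using (hasDerivAt_id (t:ℂ)).const_mul (-b)
    have h2 : HasDerivAt (fun z : ℂ => Complex.exp (-(b * z)))
        (Complex.exp (-(b * t)) * (-b)) t :=
      (Complex.hasDerivAt_exp (-(b * (t:ℂ)))).comp (t:ℂ) h1
    have h3 : HasDerivAt (fun z : ℂ => b^3*z^3 + (3*b^2*z^2 + (6*b*z + 6)))
        (3*b^3*(t:ℂ)^2 + (6*b^2*(t:ℂ) + 6*b)) t := by
      have h := ((hasDerivAt_pow 3 (t:ℂ)).const_mul (b^3)).add
        (((hasDerivAt_pow 2 (t:ℂ)).const_mul (3*b^2)).add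
          (((hasDerivAt_id' (t:ℂ)).const_mul (6*b)).add (hasDerivAt_const (t:ℂ) (6:ℂ))))
      exact h.congr_deriv (by push_cast; ring)
    have := (h2.neg.mul h3).comp_ofReal
    convert this using 1
    show _ = _ + -Complex.exp (-(b * (t:ℂ))) * _; ring
    rfl
  have htend : Tendsto F atTop (𝓝 0) := by
    have hFalt : F = fun t : ℝ => (t:ℂ)^3 * Complex.exp (-(b*t)) * (-b^3)
        + ((t:ℂ)^2 * Complex.exp (-(b*t)) * (-(3*b^2))
        + ((t:ℂ) * Complex.exp (-(b*t)) * (-(6*b))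
        + Complex.exp (-(b*t)) * (-6))) := by
      funext t; simp only [hF]; ring
    rw [hFalt]
    have h0 : Tendsto (fun t : ℝ => Complex.exp (-(b*t)) * (-6 : ℂ)) atTop (𝓝 0) := by
      simpa using aux_term_tendsto hb 0 (-6 : ℂ)
    have h1 : Tendsto (fun t : ℝ => (t:ℂ) * Complex.exp (-(b*t)) * (-(6*b))) atTop (𝓝 0) := by
      simpa using aux_term_tendsto hb 1 (-(6*b))
    simpa using (aux_term_tendsto hb 3 (-b^3)).add
      ((aux_term_tendsto hb 2 (-(3*b^2))).add (h1.add h0))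
  have hint : IntegrableOn (fun t : ℝ => b ^ 4 * ((t:ℂ)^3 * Complex.exp (-(b * t)))) (Ioi 0) :=
    (aux_int3 hb).const_mul _
  have key := integral_Ioi_of_hasDerivAt_of_tendsto' hderiv hint htend
  norm_num at key
  rw [MeasureTheory.integral_const_mul] at key
  have hF0 : F 0 = -6 := by simp [hF]
  rw [hF0, neg_neg] at key
  rw [eq_div_iff (pow_ne_zero 4 hb0), mul_comm]
  exact key

lemma aux_rpow_eq {b : ℂ} (x : ℝ) (hx : x ∈ Ioi (0:ℝ)) :
    (|2| * x ^ ((2:ℝ) - 1)) • ((fun r : ℝ => (r:ℂ) * Complex.exp (-(b * Real.sqrt r))) (x ^ (2:ℝ)))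
      = 2 * ((x:ℂ) ^ 3 * Complex.exp (-(b * x))) := by
  rw [mem_Ioi] at hx
  have h1 : x ^ (2:ℝ) = x ^ (2:ℕ) := by
    rw [← Real.rpow_natCast x 2]; norm_num
  have h2 : Real.sqrt (x ^ (2:ℕ)) = x := Real.sqrt_sq hx.le
  have h3 : x ^ ((2:ℝ) - 1) = x := by
    norm_num
  simp only [h1, h3, h2]
  simp only [real_smul]
  rw [abs_of_pos (by norm_num : (0:ℝ) < 2)]
  push_cast
  ring

lemma aux_inner_integrable {b : ℂ} (hb : 0 < b.re) :
    IntegrableOn (fun r : ℝ => (r:ℂ) * Complex.exp (-(b * Real.sqrt r))) (Ioi 0) := by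
  refine (integrableOn_Ioi_comp_rpow_iff
    (fun r : ℝ => (r:ℂ) * Complex.exp (-(b * Real.sqrt r))) (two_ne_zero)).mp ?_
  exact IntegrableOn.congr_fun ((aux_int3 hb).const_mul 2)
    (fun x hx => (aux_rpow_eq x hx).symm) measurableSet_Ioi

lemma aux_inner_val {b : ℂ} (hb : 0 < b.re) :
    ∫ r in Ioi (0:ℝ), (r:ℂ) * Complex.exp (-(b * Real.sqrt r)) = 12 / b ^ 4 := by
  rw [← integral_comp_rpow_Ioi (fun r : ℝ => (r:ℂ) * Complex.exp (-(b * Real.sqrt r)))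
    (two_ne_zero)]
  rw [setIntegral_congr_fun measurableSet_Ioi aux_rpow_eq,
    MeasureTheory.integral_const_mul, aux_val3 hb]
  ring

lemma aux_cos_pos {θ : ℝ} (ha : -Real.pi < θ) (hb : θ < Real.pi) : 0 < Real.cos (θ/2) :=
  Real.cos_pos_of_mem_Ioo ⟨by linarith, by linarith⟩

lemma aux_cos_lb {θm θM : ℝ} (h1 : -Real.pi < θm) (h3 : θM < Real.pi) {θ : ℝ}
    (ha : θm ≤ θ) (hb : θ ≤ θM) :
    min (Real.cos (θm/2)) (Real.cos (θM/2)) ≤ Real.cos (θ/2) := by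
  rcases le_total θ 0 with h | h
  · refine le_trans (min_le_left _ _) ?_
    rw [← Real.cos_neg (θm/2), ← Real.cos_neg (θ/2)]
    exact Real.cos_le_cos_of_nonneg_of_le_pi (by linarith) (by linarith) (by linarith)
  · exact le_trans (min_le_right _ _)
      (Real.cos_le_cos_of_nonneg_of_le_pi (by linarith) (by linarith) (by linarith))

lemma aux_gnorm (s θ : ℝ) {r : ℝ} (hr : 0 ≤ r) :
    ‖(r:ℂ) * Complex.exp (-((Real.sqrt s : ℂ) * Complex.exp ((θ/2 : ℝ) * Complex.I)
      * (Real.sqrt r : ℂ)))‖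
      = r * Real.exp (-(Real.sqrt s * Real.cos (θ/2) * Real.sqrt r)) := by
  rw [norm_mul, Complex.norm_exp, Complex.norm_real, Real.norm_eq_abs,
    _root_.abs_of_nonneg hr]
  congr 2
  simp only [Complex.neg_re, Complex.mul_re, Complex.mul_im, Complex.ofReal_re, Complex.ofReal_im,
    Complex.exp_ofReal_mul_I_re, Complex.exp_ofReal_mul_I_im]
  ring

lemma aux_norm_real (c : ℝ) {r : ℝ} (hr : 0 ≤ r) :
    ‖(r:ℂ) * Complex.exp (-((c:ℂ) * (Real.sqrt r : ℂ)))‖ = r * Real.exp (-(c * Real.sqrt r)) := by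
  rw [norm_mul, Complex.norm_exp, Complex.norm_real, Real.norm_eq_abs,
    _root_.abs_of_nonneg hr]
  congr 2
  simp [Complex.mul_re]

lemma aux_arg_polar {r θ : ℝ} (hr : 0 < r) (hθ1 : -Real.pi < θ) (hθ2 : θ ≤ Real.pi) :
    (Complex.polarCoord.symm (r, θ)).arg = θ := by
  rw [Complex.polarCoord_symm_apply]
  rw [Complex.arg_real_mul _ hr, Complex.ofReal_cos, Complex.ofReal_sin]
  exact Complex.arg_cos_add_sin_mul_I ⟨hθ1, hθ2⟩

lemma aux_u0_polar {s : ℝ} (hs : 0 < s) {r θ : ℝ} (hr : 0 < r)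
    (hθ1 : -Real.pi < θ) (hθ2 : θ ≤ Real.pi) :
    u0 ((s:ℂ) * Complex.polarCoord.symm (r, θ)) =
      Complex.exp (-((Real.sqrt s : ℂ) * Complex.exp ((θ/2 : ℝ) * Complex.I)
        * (Real.sqrt r : ℂ))) := by
  have habs : ‖(s:ℂ) * Complex.polarCoord.symm (r, θ)‖ = s * r := by
    rw [norm_mul, Complex.norm_real, Real.norm_eq_abs, Complex.norm_polarCoord_symm,
      _root_.abs_of_pos hs, _root_.abs_of_pos hr]
  have harg : ((s:ℂ) * Complex.polarCoord.symm (r, θ)).arg = θ := by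
    rw [Complex.arg_real_mul _ hs]
    exact aux_arg_polar hr hθ1 hθ2
  rw [u0, habs, harg, Real.cos_add_pi, Real.sin_add_pi, Real.sqrt_mul hs.le]
  congr 1
  rw [Complex.exp_mul_I, ← Complex.ofReal_cos, ← Complex.ofReal_sin]
  push_cast
  ring

lemma aux_meas (θm θM : ℝ) : MeasurableSet (sectorW θm θM) := by
  have : sectorW θm θM = {(0:ℂ)}ᶜ ∩ Complex.arg ⁻¹' (Ioo θm θM) := by
    ext z
    simp [sectorW, and_assoc]
  rw [this]
  exact (measurableSet_singleton 0).compl.inter (Complex.measurable_arg measurableSet_Ioo)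

/-- `∫_W u₀(sx) dx = 6i (e^{-2iθ_M} - e^{-2iθ_m}) s^{-2}` for every `s > 0`. -/
theorem integral_u0_sector (θm θM : ℝ) (h1 : -Real.pi < θm) (h2 : θm < θM) (h3 : θM < Real.pi) :
    ∀ s : ℝ, 0 < s →
      ∫ z in sectorW θm θM, u0 ((s : ℂ) * z) =
        6 * Complex.I *
          (Complex.exp (-2 * (θM : ℂ) * Complex.I) - Complex.exp (-2 * (θm : ℂ) * Complex.I)) /
          (s : ℂ) ^ 2 := by
  intro s hs
  have hsqrt : 0 < Real.sqrt s := Real.sqrt_pos.mpr hs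
  set c0 : ℝ := min (Real.cos (θm/2)) (Real.cos (θM/2)) with hc0
  have hc0pos : 0 < c0 := lt_min (aux_cos_pos h1 (h2.trans h3)) (aux_cos_pos (h1.trans h2) h3)
  set cR : ℝ := Real.sqrt s * c0 with hcR
  have hcRpos : 0 < cR := mul_pos hsqrt hc0pos
  set g : ℝ × ℝ → ℂ := fun p => (p.1:ℂ) *
    Complex.exp (-((Real.sqrt s : ℂ) * Complex.exp ((p.2/2 : ℝ) * Complex.I)
      * (Real.sqrt p.1 : ℂ))) with hgdef
  have hS : MeasurableSet (Ioi (0:ℝ) ×ˢ Ioo θm θM) := measurableSet_Ioi.prod measurableSet_Ioo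
  have hgcont : Continuous g := by
    apply Continuous.mul (by fun_prop)
    apply Complex.continuous_exp.comp
    fun_prop
  -- integrability of g on the product
  have hgint : Integrable g
      ((volume.restrict (Ioi (0:ℝ))).prod (volume.restrict (Ioo θm θM))) := by
    have hdom0 : IntegrableOn (fun r : ℝ => ‖(r:ℂ) * Complex.exp (-((cR:ℂ) * (Real.sqrt r : ℂ)))‖)
        (Ioi 0) := (aux_inner_integrable (b := (cR:ℂ)) (by simpa using hcRpos)).norm
    have hdom : Integrable (fun p : ℝ × ℝ =>
        ‖(p.1:ℂ) * Complex.exp (-((cR:ℂ) * (Real.sqrt p.1 : ℂ)))‖ * 1)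
        ((volume.restrict (Ioi (0:ℝ))).prod (volume.restrict (Ioo θm θM))) :=
      hdom0.mul_prod (integrable_const 1)
    refine hdom.mono' hgcont.aestronglyMeasurable ?_
    rw [Measure.prod_restrict, ← Measure.volume_eq_prod]
    filter_upwards [ae_restrict_mem hS] with p hp
    obtain ⟨hp1, hp2⟩ := hp
    rw [mem_Ioi] at hp1
    rw [mul_one, hgdef]
    have e1 := aux_gnorm s p.2 hp1.le
    have e2 := aux_norm_real cR hp1.le
    rw [e1, e2]
    apply mul_le_mul_of_nonneg_left _ hp1.le
    apply Real.exp_le_exp.mpr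
    have hcos : c0 ≤ Real.cos (p.2/2) := aux_cos_lb h1 h3 hp2.1.le hp2.2.le
    have hsr : 0 ≤ Real.sqrt p.1 := Real.sqrt_nonneg _
    rw [neg_le_neg_iff, hcR]
    exact mul_le_mul_of_nonneg_right (mul_le_mul_of_nonneg_left hcos hsqrt.le) hsr
  -- pass to polar coordinates
  rw [← integral_indicator (aux_meas θm θM), ← Complex.integral_comp_polarCoord_symm]
  have h1' : EqOn (fun p : ℝ × ℝ => p.1 • (sectorW θm θM).indicator
      (fun z => u0 ((s:ℂ) * z)) (Complex.polarCoord.symm p))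
      ((Ioi (0:ℝ) ×ˢ Ioo θm θM).indicator g) polarCoord.target := by
    rintro ⟨r, θ⟩ hp
    rw [polarCoord_target] at hp
    obtain ⟨hp1, hp2⟩ := hp
    rw [mem_Ioi] at hp1
    have harg : (Complex.polarCoord.symm (r, θ)).arg = θ := aux_arg_polar hp1 hp2.1 hp2.2.le
    have hne : Complex.polarCoord.symm (r, θ) ≠ 0 := by
      intro h
      have := Complex.norm_polarCoord_symm (r, θ)
      rw [h] at this
      simp only [norm_zero] at this
      rw [_root_.abs_of_pos hp1] at this
      exact hp1.ne this
    dsimp only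
    by_cases hmem : θ ∈ Ioo θm θM
    · have hmem' : Complex.polarCoord.symm (r, θ) ∈ sectorW θm θM := by
        refine ⟨hne, ?_, ?_⟩ <;> rw [harg]
        exacts [hmem.1, hmem.2]
      rw [Set.indicator_of_mem (show ((r, θ) : ℝ × ℝ) ∈ Ioi (0:ℝ) ×ˢ Ioo θm θM from ⟨hp1, hmem⟩),
        Set.indicator_of_mem hmem']
      simp only [hgdef]
      rw [aux_u0_polar hs hp1 hp2.1 hp2.2.le, real_smul]
    · have hnot : Complex.polarCoord.symm (r, θ) ∉ sectorW θm θM := by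
        intro h
        obtain ⟨-, ha, hb⟩ := h
        rw [harg] at ha hb
        exact hmem ⟨ha, hb⟩
      rw [Set.indicator_of_notMem (show ((r, θ) : ℝ × ℝ) ∉ Ioi (0:ℝ) ×ˢ Ioo θm θM from
          fun h => hmem h.2),
        Set.indicator_of_notMem hnot, smul_zero]
  rw [setIntegral_congr_fun polarCoord.open_target.measurableSet h1',
    setIntegral_indicator hS]
  have hSsub : polarCoord.target ∩ (Ioi (0:ℝ) ×ˢ Ioo θm θM) = Ioi (0:ℝ) ×ˢ Ioo θm θM := by
    rw [polarCoord_target, Set.prod_inter_prod, Set.inter_self,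
      Set.inter_eq_right.mpr (Ioo_subset_Ioo h1.le h3.le)]
  rw [hSsub]
  -- Fubini
  rw [show (volume : Measure (ℝ × ℝ)).restrict (Ioi (0:ℝ) ×ˢ Ioo θm θM)
      = (volume.restrict (Ioi (0:ℝ))).prod (volume.restrict (Ioo θm θM)) from by
    rw [Measure.prod_restrict, ← Measure.volume_eq_prod]]
  rw [MeasureTheory.integral_prod_symm g hgint]
  -- inner integral
  have hinner : ∀ θ ∈ Ioo θm θM, (∫ r in Ioi (0:ℝ), g (r, θ))
      = 12 / (s:ℂ)^2 * Complex.exp (-2 * Complex.I * (θ:ℂ)) := by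
    intro θ hθ
    have hbre : 0 < ((Real.sqrt s : ℂ) * Complex.exp ((θ/2 : ℝ) * Complex.I)).re := by
      have : ((Real.sqrt s : ℂ) * Complex.exp ((θ/2 : ℝ) * Complex.I)).re
          = Real.sqrt s * Real.cos (θ/2) := by
        simp only [Complex.mul_re, Complex.ofReal_re, Complex.ofReal_im,
          Complex.exp_ofReal_mul_I_re, Complex.exp_ofReal_mul_I_im]
        ring
      rw [this]
      exact mul_pos hsqrt (aux_cos_pos (h1.trans hθ.1) (hθ.2.trans h3))
    have hval := aux_inner_val hbre
    simp only [hgdef]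
    rw [hval]
    have hb4 : ((Real.sqrt s : ℂ) * Complex.exp ((θ/2 : ℝ) * Complex.I))^4
        = (s:ℂ)^2 * Complex.exp (((2*θ : ℝ)) * Complex.I) := by
      rw [mul_pow, ← Complex.exp_nat_mul]
      congr 1
      · rw [← Complex.ofReal_pow, show (Real.sqrt s)^4 = (Real.sqrt s ^ 2)^2 by ring,
          Real.sq_sqrt hs.le]
        push_cast
        ring
      · push_cast
        ring
    rw [hb4, show (-2 * Complex.I * (θ:ℂ)) = -(((2*θ : ℝ):ℂ) * Complex.I) by push_cast; ring,
      Complex.exp_neg]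
    have hexp : Complex.exp (((2*θ : ℝ)) * Complex.I) ≠ 0 := Complex.exp_ne_zero _
    have hs0 : (s:ℂ) ≠ 0 := Complex.ofReal_ne_zero.mpr hs.ne'
    field_simp
  rw [setIntegral_congr_fun measurableSet_Ioo hinner, MeasureTheory.integral_const_mul,
    ← integral_Ioc_eq_integral_Ioo, ← intervalIntegral.integral_of_le h2.le]
  have hI2 : (-2 * Complex.I) ≠ 0 := by simp
  rw [integral_exp_mul_complex hI2]
  have hs0 : (s:ℂ) ≠ 0 := Complex.ofReal_ne_zero.mpr hs.ne'
  rw [show (-2 * Complex.I * (θM:ℂ)) = -2 * (θM : ℂ) * Complex.I by ring,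
    show (-2 * Complex.I * (θm:ℂ)) = -2 * (θm : ℂ) * Complex.I by ring]
  field_simp
  ring_nf
  simp [Complex.I_sq]
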